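/- Consider uplink NOMA with K ≥ 1 devices: B > 0, σ² > 0, for each k let g_k > 0, q_k^max > 0, and let π be a permutation of {1,…,K} giving the SIC decoding order. For normalized powers q' ∈ [0,1]^K, device k achieves rate R_k(q') = B·log₂(1 + g_k·q_k^max·q'_k/(σ²·B + Σ_{j : π_j > π_k} g_j·q_j^max·q'_j)). Let θ ≥ 0 and suppose q' ∈ [0,1]^K satisfies R_k(q') ≥ θ for all k with strict inequality R_{k̂}(q') > θ at some index k̂. Define q̃' by q̃'_k = q'_k for k ≠ k̂ and q̃'_{k̂} = (2^{θ/B} − 1)·(σ²·B + Σ_{j : π_j > π_{k̂}} g_j·q_j^max·q'_j)/(g_{k̂}·q_{k̂}^max). Then 0 ≤ q̃'_{k̂} < q'_{k̂} (so q̃' ∈ [0,1]^K), R_{k̂}(q̃') = θ, R_k(q̃') ≥ R_k(q') ≥ θ for every k with π_k < π_{k̂}, and R_k(q̃') = R_k(q') for every k with π_k > π_{k̂}. (Core of Lemma 7: a feasible solution can be modified so that every rate constraint holds with equality.) -/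

import Mathlib

open Finset in
/-- Core of Lemma 7: in uplink NOMA with SIC decoding order `π`, if all rate
constraints `R_k(q') ≥ θ` hold and that of device `k̂` is strictly slack, then
lowering `q'_{k̂}` to `(2^{θ/B} − 1)(σ²B + Σ_{π_j > π_{k̂}} g_j q_j^max q'_j)
/ (g_{k̂} q_{k̂}^max)` keeps the normalized power in `[0,1)`, makes the
constraint of `k̂` tight, does not decrease earlier-decoded devices' rates, and
leaves later-decoded devices' rates unchanged. -/
theorem stmt_14
    (K : ℕ) (hK : 1 ≤ K)
    (B σ2 : ℝ) (hB : 0 < B) (hσ2 : 0 < σ2)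
    (g qmax : Fin K → ℝ) (hg : ∀ k, 0 < g k) (hqmax : ∀ k, 0 < qmax k)
    (π : Equiv.Perm (Fin K))
    (R : (Fin K → ℝ) → Fin K → ℝ)
    (hR : ∀ q k, R q k = B * Real.logb 2
      (1 + g k * qmax k * q k /
        (σ2 * B + ∑ j ∈ univ.filter (fun j => π k < π j), g j * qmax j * q j)))
    (θ : ℝ) (hθ : 0 ≤ θ)
    (q' : Fin K → ℝ) (hq'0 : ∀ k, 0 ≤ q' k) (hq'1 : ∀ k, q' k ≤ 1)
    (khat : Fin K)
    (hfeas : ∀ k, R q' k ≥ θ)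
    (hslack : R q' khat > θ)
    (qtilde : Fin K → ℝ)
    (hqtilde : ∀ k, qtilde k = if k = khat then
        ((2 : ℝ) ^ (θ / B) - 1) *
          (σ2 * B + ∑ j ∈ univ.filter (fun j => π khat < π j), g j * qmax j * q' j)
          / (g khat * qmax khat)
      else q' k) :
    0 ≤ qtilde khat ∧ qtilde khat < q' khat ∧
    (∀ k, 0 ≤ qtilde k ∧ qtilde k ≤ 1) ∧
    R qtilde khat = θ ∧
    (∀ k, π k < π khat → R qtilde k ≥ R q' k) ∧
    (∀ k, π khat < π k → R qtilde k = R q' k) := by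
  have h2 : (1:ℝ) < 2 := one_lt_two
  set c : ℝ := (2:ℝ) ^ (θ / B) - 1 with hc
  have hθB : 0 ≤ θ / B := div_nonneg hθ hB.le
  have hc0 : 0 ≤ c := by
    have := Real.one_le_rpow one_le_two hθB
    simp only [hc]; linarith
  set D : ℝ := σ2 * B + ∑ j ∈ univ.filter (fun j => π khat < π j), g j * qmax j * q' j with hD
  have hterm : ∀ j, 0 ≤ g j * qmax j * q' j := fun j =>
    mul_nonneg (mul_nonneg (hg j).le (hqmax j).le) (hq'0 j)
  have hD0 : 0 < D := by
    have : 0 ≤ ∑ j ∈ univ.filter (fun j => π khat < π j), g j * qmax j * q' j :=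
      Finset.sum_nonneg fun j _ => hterm j
    have := mul_pos hσ2 hB
    simp only [hD]; linarith
  have hgq : 0 < g khat * qmax khat := mul_pos (hg khat) (hqmax khat)
  have hqt_hat : qtilde khat = c * D / (g khat * qmax khat) := by
    rw [hqtilde khat, if_pos rfl]
  -- strict slack gives c * D < x
  set x : ℝ := g khat * qmax khat * q' khat with hx
  have hx0 : 0 ≤ x := hterm khat
  have harg : (0:ℝ) < 1 + x / D := by
    have : 0 ≤ x / D := div_nonneg hx0 hD0.le
    linarith
  have hcD : c * D < x := by
    rw [hR] at hslack
    have h1 : θ / B < Real.logb 2 (1 + x / D) := by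
      rw [div_lt_iff₀ hB]
      linarith [hslack]
    have h3 : (2:ℝ) ^ (θ / B) < 1 + x / D :=
      (Real.lt_logb_iff_rpow_lt h2 harg).mp h1
    have : c < x / D := by simp only [hc]; linarith
    calc c * D < (x / D) * D := by exact mul_lt_mul_of_pos_right this hD0
    _ = x := by field_simp
  have h0qt : 0 ≤ qtilde khat := by
    rw [hqt_hat]; exact div_nonneg (mul_nonneg hc0 hD0.le) hgq.le
  have hlt : qtilde khat < q' khat := by
    rw [hqt_hat, div_lt_iff₀ hgq]
    calc c * D < x := hcD
    _ = q' khat * (g khat * qmax khat) := by rw [hx]; ring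
  have hbounds : ∀ k, 0 ≤ qtilde k ∧ qtilde k ≤ 1 := by
    intro k
    by_cases hk : k = khat
    · subst hk
      exact ⟨h0qt, le_trans hlt.le (hq'1 k)⟩
    · rw [hqtilde k, if_neg hk]; exact ⟨hq'0 k, hq'1 k⟩
  have hqt_le : ∀ j, qtilde j ≤ q' j := by
    intro j
    by_cases hj : j = khat
    · subst hj; exact hlt.le
    · rw [hqtilde j, if_neg hj]
  have hqt0 : ∀ j, 0 ≤ qtilde j := fun j => (hbounds j).1
  have htermt : ∀ j, 0 ≤ g j * qmax j * qtilde j := fun j =>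
    mul_nonneg (mul_nonneg (hg j).le (hqmax j).le) (hqt0 j)
  -- the sum in khat's denominator is unchanged
  have hsum_hat : ∑ j ∈ univ.filter (fun j => π khat < π j), g j * qmax j * qtilde j
      = ∑ j ∈ univ.filter (fun j => π khat < π j), g j * qmax j * q' j := by
    refine Finset.sum_congr rfl fun j hj => ?_
    simp only [mem_filter] at hj
    have hjne : j ≠ khat := by
      intro h; subst h; exact lt_irrefl _ hj.2
    rw [hqtilde j, if_neg hjne]
  have hRtight : R qtilde khat = θ := by
    rw [hR, hsum_hat]
    have hnum : g khat * qmax khat * qtilde khat = c * D := by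
      rw [hqt_hat]; field_simp
      exact mul_div_cancel_left₀ c hgq.ne'
    rw [show σ2 * B + ∑ j ∈ univ.filter (fun j => π khat < π j), g j * qmax j * q' j = D from rfl,
      hnum]
    have : c * D / D = c := by field_simp
    rw [this]
    have : (1:ℝ) + c = (2:ℝ) ^ (θ / B) := by simp only [hc]; ring
    rw [this, Real.logb_rpow (by norm_num : (0:ℝ) < 2) (by norm_num : (2:ℝ) ≠ 1)]
    field_simp
  refine ⟨h0qt, hlt, hbounds, hRtight, ?_, ?_⟩
  · intro k hk
    have hkne : k ≠ khat := by
      intro h; subst h; exact lt_irrefl _ hk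
    have hnum : g k * qmax k * qtilde k = g k * qmax k * q' k := by
      rw [hqtilde k, if_neg hkne]
    set S := univ.filter (fun j => π k < π j) with hS
    have hsle : ∑ j ∈ S, g j * qmax j * qtilde j ≤ ∑ j ∈ S, g j * qmax j * q' j :=
      Finset.sum_le_sum fun j _ =>
        mul_le_mul_of_nonneg_left (hqt_le j) (mul_nonneg (hg j).le (hqmax j).le)
    have hs0 : 0 ≤ ∑ j ∈ S, g j * qmax j * qtilde j :=
      Finset.sum_nonneg fun j _ => htermt j
    have hD2 : 0 < σ2 * B + ∑ j ∈ S, g j * qmax j * qtilde j := by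
      have := mul_pos hσ2 hB; linarith
    have hD1 : 0 < σ2 * B + ∑ j ∈ S, g j * qmax j * q' j := by linarith
    rw [hR, hR, hnum]
    have hnumk : 0 ≤ g k * qmax k * q' k := hterm k
    have hdivle : g k * qmax k * q' k / (σ2 * B + ∑ j ∈ S, g j * qmax j * q' j)
        ≤ g k * qmax k * q' k / (σ2 * B + ∑ j ∈ S, g j * qmax j * qtilde j) := by
      apply div_le_div_of_nonneg_left hnumk hD2
      linarith
    have hp1 : (0:ℝ) < 1 + g k * qmax k * q' k / (σ2 * B + ∑ j ∈ S, g j * qmax j * q' j) := by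
      have : 0 ≤ g k * qmax k * q' k / (σ2 * B + ∑ j ∈ S, g j * qmax j * q' j) :=
        div_nonneg hnumk hD1.le
      linarith
    have hle2 : 1 + g k * qmax k * q' k / (σ2 * B + ∑ j ∈ S, g j * qmax j * q' j)
        ≤ 1 + g k * qmax k * q' k / (σ2 * B + ∑ j ∈ S, g j * qmax j * qtilde j) := by
      linarith
    have hlog := Real.logb_le_logb_of_le h2 hp1 hle2
    exact mul_le_mul_of_nonneg_left hlog hB.le
  · intro k hk
    have hkne : k ≠ khat := by
      intro h; subst h; exact lt_irrefl _ hk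
    have hnum : g k * qmax k * qtilde k = g k * qmax k * q' k := by
      rw [hqtilde k, if_neg hkne]
    have hsum : ∑ j ∈ univ.filter (fun j => π k < π j), g j * qmax j * qtilde j
        = ∑ j ∈ univ.filter (fun j => π k < π j), g j * qmax j * q' j := by
      refine Finset.sum_congr rfl fun j hj => ?_
      simp only [mem_filter] at hj
      have hjne : j ≠ khat := by
        intro h; subst h
        exact absurd (hk.trans hj.2) (lt_irrefl _)
      rw [hqtilde j, if_neg hjne]
    rw [hR, hR, hnum, hsum]
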